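/- Let Y be a real-valued random variable whose law has a density ρ bounded by ‖ρ‖∞, and let A be a normal matrix in ℂ^{n×n}. Then for any 0 < s < 1, the expectation E[‖(Y·I + A)^{-1}‖^s] (operator 2-norm) is at most (2n)^s/(1-s) · ‖ρ‖∞^s. -/

import Mathlib

open MeasureTheory Matrix

lemma aux_eval_charpoly {n : ℕ} (M : Matrix (Fin n) (Fin n) ℂ) (z : ℂ) :
    M.charpoly.eval z = (z • (1 : Matrix (Fin n) (Fin n) ℂ) - M).det := by
  rw [Matrix.charpoly, ← Polynomial.coe_evalRingHom, RingHom.map_det]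
  congr 1
  ext i j
  by_cases h : i = j
  · subst h
    simp [Matrix.charmatrix_apply_eq, Matrix.smul_apply, Matrix.one_apply, Matrix.sub_apply]
  · simp [Matrix.charmatrix_apply_ne _ _ _ h, Matrix.smul_apply, Matrix.one_apply_ne h,
      Matrix.sub_apply]

lemma aux_root_of_mem_spectrum {n : ℕ} (M : Matrix (Fin n) (Fin n) ℂ) (z : ℂ)
    (hz : z ∈ spectrum ℂ M) : M.charpoly.IsRoot z := by
  rw [spectrum.mem_iff] at hz
  rw [Polynomial.IsRoot, aux_eval_charpoly]
  rw [Algebra.algebraMap_eq_smul_one] at hz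
  by_contra hdet
  exact hz ((Matrix.isUnit_iff_isUnit_det _).mpr (isUnit_iff_ne_zero.mpr hdet))

lemma aux_opnorm_inv {n : ℕ} (M : Matrix (Fin n) (Fin n) ℂ)
    (hM : M * Mᴴ = Mᴴ * M) {m : ℝ} (hm : 0 < m)
    (hspec : ∀ z ∈ spectrum ℂ M, m ≤ ‖z‖) :
    ‖Matrix.toEuclideanCLM (𝕜 := ℂ) M⁻¹‖ ≤ m⁻¹ := by
  by_cases hU : IsUnit M
  · obtain ⟨u, hu⟩ := hU
    have hinv : M⁻¹ = ↑u⁻¹ := by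
      rw [← hu, Matrix.nonsing_inv_eq_ringInverse, Ring.inverse_unit]
    have h1 : M⁻¹ * (M⁻¹)ᴴ = (M⁻¹)ᴴ * M⁻¹ := by
      rw [Matrix.conjTranspose_nonsing_inv, ← Matrix.mul_inv_rev, ← Matrix.mul_inv_rev, hM]
    set c := Matrix.toEuclideanCLM (𝕜 := ℂ) M⁻¹ with hc
    have hnorm : IsStarNormal c := by
      constructor
      rw [Commute, SemiconjBy, hc, ← map_star, ← _root_.map_mul, ← _root_.map_mul]
      congr 1
      rw [Matrix.star_eq_conjTranspose]
      exact h1.symm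
    have hrad := IsStarNormal.spectralRadius_eq_nnnorm c
    have hσ : spectrum ℂ c = spectrum ℂ M⁻¹ :=
      AlgEquiv.spectrum_eq (Matrix.toEuclideanCLM (𝕜 := ℂ)) _
    have hz : ∀ z ∈ spectrum ℂ c, (‖z‖₊ : ENNReal) ≤ ENNReal.ofReal m⁻¹ := by
      intro z hzmem
      rw [hσ] at hzmem
      have hzne : z ≠ 0 := by
        rintro rfl
        exact spectrum.zero_notMem ℂ (hinv ▸ u⁻¹.isUnit) hzmem
      have hmem : ((Units.mk0 z hzne : ℂ) : ℂ) ∈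
          spectrum ℂ ((u⁻¹ : (Matrix (Fin n) (Fin n) ℂ)ˣ) : Matrix (Fin n) (Fin n) ℂ) := by
        rwa [← hinv]
      have h2 := spectrum.inv_mem_iff.mp hmem
      rw [inv_inv] at h2
      have h3 : z⁻¹ ∈ spectrum ℂ M := by simpa [hu] using h2
      have h4 := hspec _ h3
      rw [norm_inv] at h4
      have h5 : ‖z‖ ≤ m⁻¹ := by
        rw [← inv_inv ‖z‖]
        exact inv_anti₀ hm h4
      rw [← ENNReal.ofReal_coe_nnreal, coe_nnnorm]
      exact ENNReal.ofReal_le_ofReal h5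
    have hb : spectralRadius ℂ c ≤ ENNReal.ofReal m⁻¹ := by
      rw [spectralRadius]
      exact iSup₂_le hz
    rw [hrad] at hb
    rw [← ENNReal.ofReal_coe_nnreal, coe_nnnorm,
      ENNReal.ofReal_le_ofReal_iff (inv_nonneg.mpr hm.le)] at hb
    exact hb
  · rw [Matrix.isUnit_iff_isUnit_det] at hU
    rw [Matrix.nonsing_inv_apply_not_isUnit _ hU, map_zero, norm_zero]
    positivity

lemma aux_g (T s : ℝ) (hT : 0 < T) (hs0 : 0 < s) (hs1 : s < 1) :
    Integrable (fun u : ℝ => (Set.Ioo (0:ℝ) T).indicator (fun t => t ^ (-s) - T ^ (-s)) |u|)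
      volume ∧
    ∫ u : ℝ, (Set.Ioo (0:ℝ) T).indicator (fun t => t ^ (-s) - T ^ (-s)) |u|
      = 2 * (T ^ (1-s)/(1-s) - T ^ (1-s)) := by
  set G : ℝ → ℝ := (Set.Ioo (0:ℝ) T).indicator (fun t => t ^ (-s) - T ^ (-s)) with hG
  have hrpow : IntegrableOn (fun t : ℝ => t ^ (-s)) (Set.Ioc 0 T) volume := by
    have := intervalIntegral.intervalIntegrable_rpow' (a := 0) (b := T) (r := -s) (by linarith)
    rwa [intervalIntegrable_iff_integrableOn_Ioc_of_le hT.le] at this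
  have hsub : IntegrableOn (fun t : ℝ => t ^ (-s) - T ^ (-s)) (Set.Ioo 0 T) volume :=
    ((hrpow.mono_set Set.Ioo_subset_Ioc_self).sub (integrableOn_const
      (by rw [Real.volume_Ioo]; exact ENNReal.ofReal_ne_top)))
  have hGInt : Integrable G volume := hsub.integrable_indicator measurableSet_Ioo
  have int_Ioi : IntegrableOn (fun x : ℝ => G |x|) (Set.Ioi 0) volume := by
    apply (hGInt.integrableOn (s := Set.Ioi 0)).congr_fun ?_ measurableSet_Ioi
    intro x hx
    simp only
    rw [abs_of_pos hx]
  have int_Iic : IntegrableOn (fun x : ℝ => G |x|) (Set.Iic 0) volume := by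
    rw [← Measure.map_neg_eq_self (volume : Measure ℝ)]
    have m : MeasurableEmbedding fun x : ℝ => -x := (Homeomorph.neg ℝ).measurableEmbedding
    rw [m.integrableOn_map_iff]
    simp_rw [Function.comp_def, abs_neg, Set.neg_preimage, Set.neg_Iic, neg_zero]
    exact Iff.mpr integrableOn_Ici_iff_integrableOn_Ioi int_Ioi
  have hint : Integrable (fun x : ℝ => G |x|) volume := by
    have := int_Iic.union int_Ioi
    rwa [Set.Iic_union_Ioi, integrableOn_univ] at this
  refine ⟨hint, ?_⟩
  rw [integral_comp_abs (f := G)]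
  congr 1
  rw [hG, integral_indicator measurableSet_Ioo, Measure.restrict_restrict measurableSet_Ioo,
    Set.inter_eq_left.mpr (Set.Ioo_subset_Ioi_self)]
  rw [← integral_Ioc_eq_integral_Ioo, ← intervalIntegral.integral_of_le hT.le]
  rw [intervalIntegral.integral_sub
    (by exact intervalIntegral.intervalIntegrable_rpow' (by linarith))
    intervalIntegrable_const]
  rw [integral_rpow (Or.inl (by linarith))]
  rw [intervalIntegral.integral_const]
  rw [Real.zero_rpow (by linarith), sub_zero, sub_zero, smul_eq_mul]
  have : T * T ^ (-s) = T ^ (1 - s) := by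
    rw [show (1:ℝ)-s = 1 + (-s) by ring, Real.rpow_add hT, Real.rpow_one]
  rw [this]
  rw [show -s+1 = 1-s by ring]

/-- If `Y` is a real random variable whose law has density `ρ` bounded by `R`,
and `A` is a normal matrix in `ℂ^{n×n}`, then for `0 < s < 1`,
`E[‖(Y·I + A)⁻¹‖^s] ≤ (2n)^s/(1-s) · R^s`, where `‖·‖` is the spectral norm. -/
theorem stmt_0 {Ω : Type*} [MeasurableSpace Ω] (μ : Measure Ω) [IsProbabilityMeasure μ]
    (Y : Ω → ℝ) (hY : Measurable Y) (ρ : ℝ → ℝ) (hρ0 : ∀ x, 0 ≤ ρ x)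
    (hlaw : μ.map Y = volume.withDensity (fun x => ENNReal.ofReal (ρ x)))
    (R : ℝ) (hρR : ∀ x, ρ x ≤ R)
    (n : ℕ) (A : Matrix (Fin n) (Fin n) ℂ) (hA : A * A.conjTranspose = A.conjTranspose * A)
    (s : ℝ) (hs0 : 0 < s) (hs1 : s < 1) :
    ∫ ω, ‖Matrix.toEuclideanCLM (𝕜 := ℂ)
        (((Y ω : ℂ) • (1 : Matrix (Fin n) (Fin n) ℂ) + A)⁻¹)‖ ^ s ∂μ
      ≤ (2 * n : ℝ) ^ s / (1 - s) * R ^ s := by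
  have hR0 : 0 ≤ R := le_trans (hρ0 0) (hρR 0)
  have h1s : (0:ℝ) < 1 - s := by linarith
  -- trivial case n = 0
  rcases Nat.eq_zero_or_pos n with hn | hn
  · subst hn
    have hzero : ∀ ω, ‖Matrix.toEuclideanCLM (𝕜 := ℂ)
        (((Y ω : ℂ) • (1 : Matrix (Fin 0) (Fin 0) ℂ) + A)⁻¹)‖ ^ s = 0 := by
      intro ω
      have h0 : (((Y ω : ℂ) • (1 : Matrix (Fin 0) (Fin 0) ℂ) + A)⁻¹) = 0 :=
        Subsingleton.elim _ _
      rw [h0, map_zero, norm_zero, Real.zero_rpow hs0.ne']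
    simp only [hzero]
    rw [integral_zero]
    have : ((2:ℝ) * (0:ℕ)) ^ s = 0 := by
      norm_num
      exact Real.zero_rpow hs0.ne'
    rw [this]
    simp
  -- now n ≥ 1
  have hmapP : IsProbabilityMeasure (μ.map Y) := Measure.isProbabilityMeasure_map hY.aemeasurable
  have hR : 0 < R := by
    rcases lt_or_ge 0 R with h | h
    · exact h
    · exfalso
      have hρz : ∀ x, ENNReal.ofReal (ρ x) = 0 := fun x => by
        simp [ENNReal.ofReal_eq_zero.mpr (le_trans (hρR x) h)]
      have hz : μ.map Y = 0 := by
        rw [hlaw]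
        simp only [hρz]
        simp [withDensity_zero]
      have h1 : (μ.map Y) Set.univ = 1 := measure_univ
      rw [hz] at h1
      simp at h1
  have hν : μ.map Y ≤ (ENNReal.ofReal R) • (volume : Measure ℝ) := by
    rw [hlaw]
    refine Measure.le_iff.mpr fun t ht => ?_
    rw [withDensity_apply _ ht, Measure.smul_apply, smul_eq_mul]
    calc ∫⁻ x in t, ENNReal.ofReal (ρ x) ∂volume
        ≤ ∫⁻ _ in t, ENNReal.ofReal R ∂volume :=
          lintegral_mono fun x => ENNReal.ofReal_le_ofReal (hρR x)
      _ = ENNReal.ofReal R * volume t := by rw [setLIntegral_const]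
  set K : ℝ := 2 * n * R with hKdef
  have hK : 0 < K := by positivity
  set T : ℝ := K⁻¹ with hTdef
  have hT : 0 < T := by positivity
  set G : ℝ → ℝ := (Set.Ioo (0:ℝ) T).indicator (fun t => t ^ (-s) - T ^ (-s)) with hGdef
  set g : ℝ → ℝ := fun u => G |u| with hgdef
  obtain ⟨hgInt, hgVal⟩ := aux_g T s hT hs0 hs1
  have hanti : ∀ a b : ℝ, 0 < a → a ≤ b → b ^ (-s) ≤ a ^ (-s) := by
    intro a b ha hab
    rw [Real.rpow_neg ha.le, Real.rpow_neg (ha.le.trans hab)]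
    exact inv_anti₀ (Real.rpow_pos_of_pos ha s) (Real.rpow_le_rpow ha.le hab hs0.le)
  have hgnonneg : ∀ u, 0 ≤ g u := by
    intro u
    apply Set.indicator_nonneg
    intro t ht
    have := hanti t T ht.1 ht.2.le
    linarith
  have hGmeas : Measurable G :=
    ((measurable_id.pow measurable_const).sub measurable_const).indicator measurableSet_Ioo
  have hgmeas : Measurable g := hGmeas.comp measurable_abs
  set Λ : Finset ℂ := A.charpoly.roots.toFinset with hΛdef
  have hcard : (Λ.card : ℝ) ≤ n := by
    have h1 : Λ.card ≤ A.charpoly.roots.card := A.charpoly.roots.toFinset_card_le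
    have h2 : A.charpoly.roots.card ≤ A.charpoly.natDegree := A.charpoly.card_roots'
    have h3 : A.charpoly.natDegree = n := by
      rw [Matrix.charpoly_natDegree_eq_dim, Fintype.card_fin]
    exact_mod_cast (h1.trans h2).trans_eq h3
  have hdeg : A.charpoly.natDegree = n := by
    rw [Matrix.charpoly_natDegree_eq_dim, Fintype.card_fin]
  have hΛne : Λ.Nonempty := by
    have hpos : 0 < A.charpoly.degree := by
      rw [← Polynomial.natDegree_pos_iff_degree_pos, hdeg]
      exact hn
    obtain ⟨z, hz⟩ := Complex.exists_root hpos
    exact ⟨z, Multiset.mem_toFinset.mpr (Polynomial.mem_roots'.mpr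
      ⟨(Matrix.charpoly_monic A).ne_zero, hz⟩)⟩
  -- pointwise bound
  have bound : ∀ y : ℝ, (∀ l ∈ Λ, y + l.re ≠ 0) →
      ‖Matrix.toEuclideanCLM (𝕜 := ℂ)
        (((y : ℂ) • (1 : Matrix (Fin n) (Fin n) ℂ) + A)⁻¹)‖ ^ s
      ≤ T ^ (-s) + ∑ l ∈ Λ, g (y + l.re) := by
    intro y hy
    have hsum0 : 0 ≤ ∑ l ∈ Λ, g (y + l.re) := Finset.sum_nonneg fun l _ => hgnonneg _
    have hTs0 : 0 ≤ T ^ (-s) := Real.rpow_nonneg hT.le _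
    set M : Matrix (Fin n) (Fin n) ℂ := (y : ℂ) • 1 + A with hMdef
    have hMnormal : M * Mᴴ = Mᴴ * M := by
      have hsc : ((y:ℂ) • (1 : Matrix (Fin n) (Fin n) ℂ))ᴴ = (y:ℂ) • 1 := by
        rw [Matrix.conjTranspose_smul, Matrix.conjTranspose_one]
        congr 1
        exact Complex.conj_ofReal y
      rw [hMdef, Matrix.conjTranspose_add, hsc]
      simp only [Matrix.add_mul, Matrix.mul_add, Matrix.smul_mul, Matrix.mul_smul,
        Matrix.one_mul, Matrix.mul_one, hA, smul_add]
      abel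
    by_cases hU : IsUnit M.det
    · have hmemroot : ∀ l ∈ Λ, A.charpoly.IsRoot l := by
        intro l hl
        exact (Polynomial.mem_roots'.mp (Multiset.mem_toFinset.mp hl)).2
      obtain ⟨l₀, hl₀Λ, hl₀⟩ := Finset.exists_mem_eq_inf' hΛne (fun l => ‖(y:ℂ) + l‖)
      set m : ℝ := ‖(y:ℂ) + l₀‖ with hmdef
      have hminf : ∀ b ∈ Λ, m ≤ ‖(y:ℂ) + b‖ := fun b hb => hl₀ ▸ Finset.inf'_le _ hb
      have hm0 : 0 < m := by
        rw [hmdef, norm_pos_iff]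
        intro h0
        have hl0eq : l₀ = -(y:ℂ) := by linear_combination h0
        have hroot := hmemroot l₀ hl₀Λ
        rw [Polynomial.IsRoot, aux_eval_charpoly] at hroot
        have hMeq : l₀ • (1 : Matrix (Fin n) (Fin n) ℂ) - A = -M := by
          rw [hl0eq, hMdef]
          module
        rw [hMeq, Matrix.det_neg] at hroot
        rw [Fintype.card_fin] at hroot
        have : M.det = 0 := by
          have hne : ((-1 : ℂ)) ^ n ≠ 0 := by
            apply pow_ne_zero; norm_num
          exact (mul_eq_zero.mp hroot).resolve_left hne
        rw [this] at hU
        simp at hU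
      have hspec : ∀ z ∈ spectrum ℂ M, m ≤ ‖z‖ := by
        intro z hz
        have hM' : M = algebraMap ℂ (Matrix (Fin n) (Fin n) ℂ) (y:ℂ) + A := by
          rw [hMdef, Algebra.algebraMap_eq_smul_one]
        rw [hM', ← spectrum.singleton_add_eq] at hz
        obtain ⟨a, ha, b, hb, rfl⟩ := Set.mem_add.mp hz
        rw [Set.mem_singleton_iff] at ha
        subst ha
        have hbΛ : b ∈ Λ := Multiset.mem_toFinset.mpr (Polynomial.mem_roots'.mpr
          ⟨(Matrix.charpoly_monic A).ne_zero, aux_root_of_mem_spectrum A b hb⟩)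
        exact hminf b hbΛ
      have hUM : IsUnit M := (Matrix.isUnit_iff_isUnit_det M).mpr hU
      have key := aux_opnorm_inv M hMnormal hm0 hspec
      have hfs : ‖Matrix.toEuclideanCLM (𝕜 := ℂ) M⁻¹‖ ^ s ≤ m ^ (-s) := by
        have h1 : ‖Matrix.toEuclideanCLM (𝕜 := ℂ) M⁻¹‖ ^ s ≤ (m⁻¹) ^ s :=
          Real.rpow_le_rpow (norm_nonneg _) key hs0.le
        rwa [Real.rpow_neg hm0.le, ← Real.inv_rpow hm0.le]
      rcases le_or_gt T m with hcase | hcase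
      · exact le_trans hfs (le_trans (hanti T m hT hcase) (le_add_of_nonneg_right hsum0))
      · set u : ℝ := y + l₀.re with hudef
        have hune : u ≠ 0 := hy l₀ hl₀Λ
        have hu0 : 0 < |u| := abs_pos.mpr hune
        have huabs : |u| ≤ m := by
          have hre : u = ((y:ℂ) + l₀).re := by simp [hudef]
          rw [hmdef, hre]
          exact Complex.abs_re_le_norm _
        have hgu : g u = |u| ^ (-s) - T ^ (-s) := by
          show G |u| = _
          rw [hGdef, Set.indicator_of_mem]
          exact Set.mem_Ioo.mpr ⟨hu0, lt_of_le_of_lt huabs hcase⟩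
        calc ‖Matrix.toEuclideanCLM (𝕜 := ℂ) M⁻¹‖ ^ s ≤ m ^ (-s) := hfs
          _ ≤ |u| ^ (-s) := hanti |u| m hu0 huabs
          _ = T ^ (-s) + g u := by rw [hgu]; ring
          _ ≤ T ^ (-s) + ∑ l ∈ Λ, g (y + l.re) := by
              apply add_le_add_right
              simpa [hudef] using
                Finset.single_le_sum (f := fun l : ℂ => g (y + l.re))
                  (fun l _ => hgnonneg _) hl₀Λ
    · rw [Matrix.nonsing_inv_apply_not_isUnit _ hU, map_zero, norm_zero,
        Real.zero_rpow hs0.ne']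
      exact add_nonneg hTs0 hsum0
  -- a.e. nondegeneracy
  have hsing : ∀ c : ℝ, μ (Y ⁻¹' {c}) = 0 := by
    intro c
    rw [← Measure.map_apply hY (measurableSet_singleton c)]
    refine le_antisymm ?_ zero_le
    calc (μ.map Y) {c} ≤ (ENNReal.ofReal R • (volume : Measure ℝ)) {c} := Measure.le_iff'.mp hν _
      _ = 0 := by rw [Measure.smul_apply, Real.volume_singleton]; simp
  have hae : ∀ᵐ ω ∂μ, ∀ l ∈ Λ, Y ω + l.re ≠ 0 := by
    have hae' : ∀ᵐ ω ∂μ, ∀ l ∈ (↑Λ : Set ℂ), Y ω + l.re ≠ 0 := by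
      rw [ae_ball_iff Λ.countable_toSet]
      intro l _
      have := hsing (-l.re)
      rw [ae_iff]
      convert this using 1
      congr 1
      ext ω
      simp only [Set.mem_setOf_eq, Set.mem_preimage, Set.mem_singleton_iff]
      constructor
      · intro h; push_neg at h; linarith
      · intro h; push_neg; linarith
    filter_upwards [hae'] with ω hω l hl
    exact hω l (Finset.mem_coe.mpr hl)
  -- integrability of the comparison functions
  have hψInt : ∀ l : ℂ, Integrable (fun ω => g (Y ω + l.re)) μ := by
    intro l
    have hmeas : Measurable (fun x : ℝ => g (x + l.re)) := hgmeas.comp (measurable_add_const _)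
    have h1 : Integrable (fun x : ℝ => g (x + l.re)) volume := hgInt.comp_add_right l.re
    have h2 : Integrable (fun x : ℝ => g (x + l.re)) (ENNReal.ofReal R • volume) :=
      h1.smul_measure ENNReal.ofReal_ne_top
    have h3 : Integrable (fun x : ℝ => g (x + l.re)) (μ.map Y) := h2.mono_measure hν
    exact (integrable_map_measure hmeas.aestronglyMeasurable hY.aemeasurable).mp h3
  have hterm : ∀ l : ℂ, ∫ ω, g (Y ω + l.re) ∂μ ≤ R * (2 * (T^(1-s)/(1-s) - T^(1-s))) := by
    intro l
    have hmeas : Measurable (fun x : ℝ => g (x + l.re)) := hgmeas.comp (measurable_add_const _)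
    have h1 : Integrable (fun x : ℝ => g (x + l.re)) volume := hgInt.comp_add_right l.re
    have h2 : Integrable (fun x : ℝ => g (x + l.re)) (ENNReal.ofReal R • volume) :=
      h1.smul_measure ENNReal.ofReal_ne_top
    rw [← integral_map hY.aemeasurable hmeas.aestronglyMeasurable]
    calc ∫ x, g (x + l.re) ∂(μ.map Y)
        ≤ ∫ x, g (x + l.re) ∂(ENNReal.ofReal R • volume) :=
          integral_mono_measure hν (Filter.Eventually.of_forall fun x => hgnonneg _) h2
      _ = R * ∫ x, g (x + l.re) := by
          rw [integral_smul_measure, ENNReal.toReal_ofReal hR0, smul_eq_mul]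
      _ = R * ∫ x, g x := by rw [integral_add_right_eq_self]
      _ = R * (2 * (T^(1-s)/(1-s) - T^(1-s))) := by rw [hgVal]
  have hVpos : 0 ≤ 2 * (T^(1-s)/(1-s) - T^(1-s)) := by
    have hTpow : 0 ≤ T ^ (1-s) := Real.rpow_nonneg hT.le _
    have : T ^ (1-s) ≤ T^(1-s)/(1-s) := by
      rw [le_div_iff₀ h1s]
      nlinarith
    linarith
  -- main chain
  calc ∫ ω, ‖Matrix.toEuclideanCLM (𝕜 := ℂ)
        (((Y ω : ℂ) • (1 : Matrix (Fin n) (Fin n) ℂ) + A)⁻¹)‖ ^ s ∂μ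
      ≤ ∫ ω, (T ^ (-s) + ∑ l ∈ Λ, g (Y ω + l.re)) ∂μ := by
        apply integral_mono_of_nonneg
        · exact Filter.Eventually.of_forall fun ω => Real.rpow_nonneg (norm_nonneg _) _
        · exact (integrable_const _).add (integrable_finset_sum _ fun l _ => hψInt l)
        · filter_upwards [hae] with ω hω
          exact bound (Y ω) hω
    _ = T ^ (-s) + ∑ l ∈ Λ, ∫ ω, g (Y ω + l.re) ∂μ := by
        rw [integral_add (integrable_const _) (integrable_finset_sum _ fun l _ => hψInt l),
          integral_const, integral_finset_sum _ (fun l _ => hψInt l)]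
        simp
    _ ≤ T ^ (-s) + ∑ _l ∈ Λ, R * (2 * (T^(1-s)/(1-s) - T^(1-s))) := by
        apply add_le_add_right
        exact Finset.sum_le_sum fun l _ => hterm l
    _ = T ^ (-s) + Λ.card * (R * (2 * (T^(1-s)/(1-s) - T^(1-s)))) := by
        rw [Finset.sum_const, nsmul_eq_mul]
    _ ≤ T ^ (-s) + n * (R * (2 * (T^(1-s)/(1-s) - T^(1-s)))) := by
        apply add_le_add_right
        apply mul_le_mul_of_nonneg_right hcard
        positivity
    _ ≤ (2 * n : ℝ) ^ s / (1 - s) * R ^ s := by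
        have hTs : T ^ (-s) = K ^ s := by
          rw [hTdef, Real.inv_rpow hK.le, Real.rpow_neg hK.le, inv_inv]
        have hT1s : T ^ (1-s) = K ^ (s-1) := by
          rw [hTdef, Real.inv_rpow hK.le, ← Real.rpow_neg hK.le, show -(1-s) = s-1 by ring]
        have hKmul : K * K ^ (s-1) = K ^ s := by
          calc K * K ^ (s-1) = K ^ (1:ℝ) * K ^ (s-1) := by rw [Real.rpow_one]
            _ = K ^ (1 + (s-1)) := (Real.rpow_add hK _ _).symm
            _ = K ^ s := by norm_num
        have hRHS : (2 * n : ℝ) ^ s / (1 - s) * R ^ s = K ^ s / (1-s) := by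
          rw [div_mul_eq_mul_div, ← Real.mul_rpow (by positivity) hR0, hKdef]
        rw [hTs, hT1s, hRHS]
        have hstep : (n:ℝ) * (R * (2 * (K^(s-1)/(1-s) - K^(s-1)))) = K^s/(1-s) - K^s := by
          have h1 : (n:ℝ) * (R * (2 * (K^(s-1)/(1-s) - K^(s-1))))
              = K * (K^(s-1)/(1-s) - K^(s-1)) := by
            rw [hKdef]; ring
          rw [h1, mul_sub, ← mul_div_assoc, hKmul]
        rw [hstep]
        linarith
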